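/- Let E be a compact metric space with its Borel σ-algebra and let P be a Markov kernel on E such that the map x ↦ P(x, ·) is continuous with respect to the total variation norm, and such that for all x, y ∈ E the probability measures P(x, ·) and P(y, ·) are mutually absolutely continuous. Then there exists η < 1 such that ‖ν_1 P − ν_2 P‖_TV ≤ η ‖ν_1 − ν_2‖_TV for all Borel probability measures ν_1, ν_2 on E. -/

import Mathlib

open MeasureTheory ProbabilityTheory Filter Topology

/-- Total variation distance between two measures:
`tvDist μ ν = sup { |μ(s) − ν(s)| : s measurable }`. (For probability measures this is
one half of the total variation norm of `μ − ν`; the statement below is invariant under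
this choice of normalisation.) -/
noncomputable def tvDist {E : Type*} [MeasurableSpace E] (μ ν : Measure E) : ENNReal :=
  ⨆ (s : Set E) (_ : MeasurableSet s), (μ s - ν s) + (ν s - μ s)

section Aux

variable {E : Type*} [MeasurableSpace E]

lemma le_tvDist (μ ν : Measure E) {s : Set E} (hs : MeasurableSet s) :
    (μ s - ν s) + (ν s - μ s) ≤ tvDist μ ν :=
  le_iSup₂ (f := fun (s : Set E) (_ : MeasurableSet s) => (μ s - ν s) + (ν s - μ s)) s hs

lemma sub_apply_le_tvDist (μ ν : Measure E) {s : Set E} (hs : MeasurableSet s) :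
    μ s - ν s ≤ tvDist μ ν :=
  le_trans le_self_add (le_tvDist μ ν hs)

lemma tvDist_le {μ ν : Measure E} {c : ENNReal}
    (h : ∀ s : Set E, MeasurableSet s → (μ s - ν s) + (ν s - μ s) ≤ c) :
    tvDist μ ν ≤ c := iSup₂_le h

lemma tvDist_comm (μ ν : Measure E) : tvDist μ ν = tvDist ν μ := by
  unfold tvDist
  congr 1; ext s; congr 1; ext hs; exact add_comm _ _

lemma tvDist_triangle (μ κ ν : Measure E) : tvDist μ ν ≤ tvDist μ κ + tvDist κ ν := by
  refine tvDist_le fun s hs => ?_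
  have h1 : ∀ a b c : ENNReal, a - c ≤ a - b + (b - c) := by
    intro a b c
    rw [tsub_le_iff_right]
    calc a ≤ (a - b) + b := le_tsub_add
    _ ≤ (a - b) + ((b - c) + c) := by gcongr; exact le_tsub_add
    _ = a - b + (b - c) + c := by ring
  calc (μ s - ν s) + (ν s - μ s)
      ≤ ((μ s - κ s) + (κ s - ν s)) + ((ν s - κ s) + (κ s - μ s)) := by
        gcongr <;> apply h1
    _ = ((μ s - κ s) + (κ s - μ s)) + ((κ s - ν s) + (ν s - κ s)) := by ring
    _ ≤ tvDist μ κ + tvDist κ ν := by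
        gcongr
        · exact le_tvDist μ κ hs
        · exact le_tvDist κ ν hs

/-- `∫ f − ∫ g ≤ ∫ (f − g)` for `ℝ≥0∞`-valued integrals. -/
lemma lintegral_tsub_le (μ : Measure E) (f g : E → ENNReal) (hg : Measurable g) :
    ∫⁻ a, f a ∂μ - ∫⁻ a, g a ∂μ ≤ ∫⁻ a, (f a - g a) ∂μ := by
  rw [tsub_le_iff_right, ← lintegral_add_right _ hg]
  exact lintegral_mono fun a => le_tsub_add

/-- If two probability measures are mutually absolutely continuous, their total variation
distance is strictly less than `1`. -/
lemma tvDist_lt_one_of_mutually_ac (μ ν : Measure E) [IsProbabilityMeasure μ]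
    [IsProbabilityMeasure ν] (hμν : μ ≪ ν) (hνμ : ν ≪ μ) : tvDist μ ν < 1 := by
  set f := μ.rnDeriv ν with hf
  have hfm : Measurable f := Measure.measurable_rnDeriv μ ν
  have hwd : ν.withDensity f = μ := Measure.withDensity_rnDeriv_eq μ ν hμν
  set c := ∫⁻ a, min (f a) 1 ∂ν with hc
  -- positivity of c
  have hfpos : ∀ᵐ a ∂ν, 0 < f a := hνμ.ae_le (Measure.rnDeriv_pos hμν)
  have hcpos : c ≠ 0 := by
    intro h0
    have hmin := (lintegral_eq_zero_iff (hfm.min measurable_const)).mp h0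
    have hfalse : ∀ᵐ a ∂ν, False := by
      filter_upwards [hfpos, hmin] with a ha ha'
      exact (lt_min ha one_pos).ne' (by simpa using ha')
    exact IsProbabilityMeasure.ne_zero ν (by simpa using hfalse)
  -- ∫ f dν = 1
  have hintf : ∫⁻ a, f a ∂ν = 1 := by
    have := congrArg (fun m : Measure E => m Set.univ) hwd
    simpa [withDensity_apply f MeasurableSet.univ] using this
  have hc1 : c ≤ 1 := by
    rw [← hintf]; exact lintegral_mono fun a => min_le_left _ _
  -- ∫ (f − 1) dν = 1 - c  and  ∫ (1 − f) dν = 1 - c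
  have hcne : c ≠ ⊤ := (lt_of_le_of_lt hc1 (by norm_num)).ne
  have key1 : ∫⁻ a, (f a - 1) ∂ν = 1 - c := by
    have hsum : ∫⁻ a, (f a - 1) ∂ν + c = 1 := by
      rw [hc, ← lintegral_add_right _ (hfm.min measurable_const)]
      have hpt : ∀ a, (f a - 1) + min (f a) 1 = f a := by
        intro a
        rcases le_total (f a) 1 with h | h
        · simp [tsub_eq_zero_of_le h, min_eq_left h]
        · rw [min_eq_right h, tsub_add_cancel_of_le h]
      calc ∫⁻ a, (f a - 1) + min (f a) 1 ∂ν = ∫⁻ a, f a ∂ν := lintegral_congr hpt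
        _ = 1 := hintf
    exact ENNReal.eq_sub_of_add_eq hcne hsum
  have key2 : ∫⁻ a, (1 - f a) ∂ν = 1 - c := by
    have hsum : ∫⁻ a, (1 - f a) ∂ν + c = 1 := by
      rw [hc, ← lintegral_add_right _ (hfm.min measurable_const)]
      have hpt : ∀ a, (1 - f a) + min (f a) 1 = 1 := by
        intro a
        rcases le_total (f a) 1 with h | h
        · rw [min_eq_left h, tsub_add_cancel_of_le h]
        · simp [tsub_eq_zero_of_le h, min_eq_right h]
      calc ∫⁻ a, (1 - f a) + min (f a) 1 ∂ν = ∫⁻ a, (1 : ENNReal) ∂ν :=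
            lintegral_congr hpt
        _ = 1 := by simp
    exact ENNReal.eq_sub_of_add_eq hcne hsum
  -- pointwise bounds
  have hbound : tvDist μ ν ≤ 1 - c := by
    refine tvDist_le fun s hs => ?_
    have hμs : μ s = ∫⁻ a in s, f a ∂ν := by rw [← hwd, withDensity_apply f hs]
    have hνs : ν s = ∫⁻ a in s, (1 : ENNReal) ∂ν := by simp
    have h1 : μ s - ν s ≤ 1 - c := by
      rw [hμs, hνs]
      calc ∫⁻ a in s, f a ∂ν - ∫⁻ a in s, (1:ENNReal) ∂ν
          ≤ ∫⁻ a in s, (f a - 1) ∂ν := lintegral_tsub_le _ _ _ measurable_const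
        _ ≤ ∫⁻ a, (f a - 1) ∂ν := setLIntegral_le_lintegral s _
        _ = 1 - c := key1
    have h2 : ν s - μ s ≤ 1 - c := by
      rw [hμs, hνs]
      calc ∫⁻ a in s, (1:ENNReal) ∂ν - ∫⁻ a in s, f a ∂ν
          ≤ ∫⁻ a in s, (1 - f a) ∂ν := lintegral_tsub_le _ _ _ hfm
        _ ≤ ∫⁻ a, (1 - f a) ∂ν := setLIntegral_le_lintegral s _
        _ = 1 - c := key2
    rcases le_total (μ s) (ν s) with h | h
    · rw [tsub_eq_zero_of_le h, zero_add]; exact h2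
    · rw [tsub_eq_zero_of_le h, add_zero]; exact h1
  exact lt_of_le_of_lt hbound (ENNReal.sub_lt_self ENNReal.one_ne_top one_ne_zero hcpos)

/-- The contraction inequality once a uniform bound `η` on pairwise TV distances is available. -/
lemma contraction_aux (P : Kernel E E) [IsMarkovKernel P]
    {η : ENNReal} (hη : ∀ x y, tvDist (P x) (P y) ≤ η)
    (ν₁ ν₂ : Measure E) [IsProbabilityMeasure ν₁] [IsProbabilityMeasure ν₂] :
    tvDist (ν₁.bind fun x => P x) (ν₂.bind fun x => P x) ≤ η * tvDist ν₁ ν₂ := by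
  classical
  set ρ : Measure E := ν₁ + ν₂ with hρ
  have hac₁ : ν₁ ≪ ρ := (Measure.le_add_right le_rfl).absolutelyContinuous
  have hac₂ : ν₂ ≪ ρ := (Measure.le_add_left le_rfl).absolutelyContinuous
  set f := ν₁.rnDeriv ρ with hfdef
  set g := ν₂.rnDeriv ρ with hgdef
  have hfm : Measurable f := Measure.measurable_rnDeriv _ _
  have hgm : Measurable g := Measure.measurable_rnDeriv _ _
  have hwd₁ : ρ.withDensity f = ν₁ := Measure.withDensity_rnDeriv_eq _ _ hac₁
  have hwd₂ : ρ.withDensity g = ν₂ := Measure.withDensity_rnDeriv_eq _ _ hac₂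
  set μp : Measure E := ρ.withDensity (fun a => f a - g a) with hμp
  set μm : Measure E := ρ.withDensity (fun a => g a - f a) with hμm
  -- the key measure identity
  have hkey : ν₁ + μm = ν₂ + μp := by
    rw [← hwd₁, ← hwd₂, hμp, hμm, ← withDensity_add_left hfm, ← withDensity_add_left hgm]
    refine withDensity_congr_ae (Filter.Eventually.of_forall fun a => ?_)
    rcases le_total (f a) (g a) with h | h
    · rw [Pi.add_apply, Pi.add_apply, add_tsub_cancel_of_le h, tsub_eq_zero_of_le h, add_zero]
    · rw [Pi.add_apply, Pi.add_apply, tsub_eq_zero_of_le h, add_zero, add_tsub_cancel_of_le h]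
  set m : ENNReal := μp Set.univ with hm
  have hμp_le : μp ≤ ν₁ := by
    rw [← hwd₁]; exact withDensity_mono (Filter.Eventually.of_forall fun a => tsub_le_self)
  have hμm_le : μm ≤ ν₂ := by
    rw [← hwd₂]; exact withDensity_mono (Filter.Eventually.of_forall fun a => tsub_le_self)
  have hm_le : m ≤ 1 := by
    have := hμp_le Set.univ
    simpa [hm] using this
  have hm_ne_top : m ≠ ⊤ := (lt_of_le_of_lt hm_le (by norm_num)).ne
  have hμm_univ : μm Set.univ = m := by
    have h := congrArg (fun μ : Measure E => μ Set.univ) hkey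
    simp only [Measure.add_apply, measure_univ] at h
    exact (ENNReal.add_right_inj ENNReal.one_ne_top).mp h
  -- m ≤ tvDist ν₁ ν₂
  have hm_le_tv : m ≤ tvDist ν₁ ν₂ := by
    set s : Set E := {a | g a < f a} with hsdef
    have hs : MeasurableSet s := measurableSet_lt hgm hfm
    have hμps : μp s = m := by
      have hcompl : μp sᶜ = 0 := by
        rw [hμp, withDensity_apply _ hs.compl]
        rw [setLIntegral_eq_zero_iff (f := fun a => f a - g a) hs.compl (hfm.sub hgm)]
        refine Filter.Eventually.of_forall fun a ha => ?_
        have : f a ≤ g a := le_of_not_gt (by simpa [hsdef] using ha)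
        exact tsub_eq_zero_of_le this
      have := measure_add_measure_compl (μ := μp) hs
      rw [hcompl, add_zero] at this
      rw [this, hm]
    have hμms : μm s = 0 := by
      rw [hμm, withDensity_apply _ hs]
      rw [setLIntegral_eq_zero_iff (f := fun a => g a - f a) hs (hgm.sub hfm)]
      refine Filter.Eventually.of_forall fun a ha => ?_
      exact tsub_eq_zero_of_le (le_of_lt (by simpa [hsdef] using ha))
    have happ := congrArg (fun μ : Measure E => μ s) hkey
    simp only [Measure.add_apply, hμms, hμps, add_zero] at happ
    have : ν₁ s - ν₂ s = m := by
      rw [happ]; exact ENNReal.add_sub_cancel_left (measure_ne_top ν₂ s)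
    calc m = ν₁ s - ν₂ s := this.symm
      _ ≤ tvDist ν₁ ν₂ := sub_apply_le_tvDist ν₁ ν₂ hs
  -- now the main bound : tvDist (ν₁ P) (ν₂ P) ≤ η * m
  have hPm : Measurable fun x => (P x : Measure E) := P.measurable
  have hmain : tvDist (ν₁.bind fun x => P x) (ν₂.bind fun x => P x) ≤ η * m := by
    refine tvDist_le fun s hs => ?_
    set a := (ν₁.bind fun x => P x) s
    set b := (ν₂.bind fun x => P x) s
    set c := ∫⁻ x, P x s ∂μp with hcdef
    set d := ∫⁻ x, P x s ∂μm with hddef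
    have ha : a = ∫⁻ x, P x s ∂ν₁ := Measure.bind_apply hs hPm.aemeasurable
    have hb : b = ∫⁻ x, P x s ∂ν₂ := Measure.bind_apply hs hPm.aemeasurable
    have hPxs : Measurable fun x => P x s := P.measurable_coe hs
    -- a + d = b + c
    have habcd : a + d = b + c := by
      rw [ha, hb, hcdef, hddef, ← lintegral_add_measure, ← lintegral_add_measure, hkey]
    have hc_le : c ≤ m := by
      calc c ≤ ∫⁻ _, 1 ∂μp := lintegral_mono fun x => prob_le_one
        _ = m := by simp [hm]
    have hd_le : d ≤ m := by
      calc d ≤ ∫⁻ _, 1 ∂μm := lintegral_mono fun x => prob_le_one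
        _ = m := by simp [hμm_univ]
    have hd_ne_top : d ≠ ⊤ := (lt_of_le_of_lt hd_le hm_ne_top.lt_top).ne
    have hc_ne_top : c ≠ ⊤ := (lt_of_le_of_lt hc_le hm_ne_top.lt_top).ne
    -- core estimate: c - d ≤ η * m  (and by symmetry d - c ≤ η * m)
    have core : ∀ (μ₁ μ₂ : Measure E), μ₁ Set.univ = m → μ₂ Set.univ = m →
        (∫⁻ x, P x s ∂μ₁) - (∫⁻ x, P x s ∂μ₂) ≤ η * m := by
      intro μ₁ μ₂ h₁ h₂
      rcases eq_or_ne m 0 with hm0 | hm0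
      · have : (∫⁻ x, P x s ∂μ₁) ≤ m := by
          calc (∫⁻ x, P x s ∂μ₁) ≤ ∫⁻ _, 1 ∂μ₁ := lintegral_mono fun x => prob_le_one
            _ = m := by simp [h₁]
        simp only [hm0, nonpos_iff_eq_zero] at this
        rw [this, zero_tsub]
        exact zero_le
      · -- multiply by m and use Fubini-style iterated integrals
        have hmul : m * ((∫⁻ x, P x s ∂μ₁) - ∫⁻ x, P x s ∂μ₂) ≤ m * (η * m) := by
          have e1 : m * (∫⁻ x, P x s ∂μ₁) = ∫⁻ x, ∫⁻ y, P x s ∂μ₂ ∂μ₁ := by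
            simp only [lintegral_const, h₂]
            rw [← lintegral_const_mul' m _ hm_ne_top]
            exact lintegral_congr fun x => mul_comm _ _
          have e2 : m * (∫⁻ x, P x s ∂μ₂) = ∫⁻ x, ∫⁻ y, P y s ∂μ₂ ∂μ₁ := by
            rw [lintegral_const, h₁, mul_comm]
          have hsub : m * ((∫⁻ x, P x s ∂μ₁) - ∫⁻ x, P x s ∂μ₂)
              ≤ ∫⁻ x, (∫⁻ y, P x s ∂μ₂) - ∫⁻ y, P y s ∂μ₂ ∂μ₁ := by
            rw [ENNReal.mul_sub (fun _ _ => hm_ne_top), e1, e2]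
            exact lintegral_tsub_le _ _ _ measurable_const
          refine hsub.trans ?_
          calc ∫⁻ x, (∫⁻ y, P x s ∂μ₂) - ∫⁻ y, P y s ∂μ₂ ∂μ₁
              ≤ ∫⁻ x, ∫⁻ y, (P x s - P y s) ∂μ₂ ∂μ₁ := by
                refine lintegral_mono fun x => ?_
                exact lintegral_tsub_le _ _ _ hPxs
            _ ≤ ∫⁻ _, ∫⁻ _, η ∂μ₂ ∂μ₁ := by
                refine lintegral_mono fun x => lintegral_mono fun y => ?_
                calc P x s - P y s ≤ (P x s - P y s) + (P y s - P x s) := le_self_add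
                  _ ≤ tvDist (P x) (P y) := le_tvDist _ _ hs
                  _ ≤ η := hη x y
            _ = m * (η * m) := by
                simp only [lintegral_const, h₁, h₂]
                ring
        exact (ENNReal.mul_le_mul_iff_right hm0 hm_ne_top).mp hmul
    have hcd : c - d ≤ η * m := core μp μm hm.symm hμm_univ
    have hdc : d - c ≤ η * m := core μm μp hμm_univ hm.symm
    -- transfer to a, b
    have hab : a - b ≤ c - d := by
      rcases le_total c d with h | h
      · have hle : a ≤ b := by
          have h1 : a + d ≤ b + d := by
            calc a + d = b + c := habcd
              _ ≤ b + d := by gcongr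
          exact ENNReal.le_of_add_le_add_right hd_ne_top h1
        simp [tsub_eq_zero_of_le hle]
      · rw [tsub_le_iff_right]
        have h4 : (c - d + b) + d = a + d := by
          calc (c - d + b) + d = (c - d + d) + b := by ring
            _ = c + b := by rw [tsub_add_cancel_of_le h]
            _ = a + d := (add_comm c b) ▸ habcd.symm
        have h5 : c - d + b = a := (ENNReal.add_left_inj hd_ne_top).mp h4
        exact h5.ge
    have hba : b - a ≤ d - c := by
      rcases le_total d c with h | h
      · have hle : b ≤ a := by
          have h1 : b + c ≤ a + c := by
            calc b + c = a + d := habcd.symm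
              _ ≤ a + c := by gcongr
          exact ENNReal.le_of_add_le_add_right hc_ne_top h1
        simp [tsub_eq_zero_of_le hle]
      · rw [tsub_le_iff_right]
        have h4 : (d - c + a) + c = b + c := by
          calc (d - c + a) + c = (d - c + c) + a := by ring
            _ = d + a := by rw [tsub_add_cancel_of_le h]
            _ = b + c := (add_comm d a) ▸ habcd
        have h5 : d - c + a = b := (ENNReal.add_left_inj hc_ne_top).mp h4
        exact h5.ge
    rcases le_total a b with h | h
    · rw [tsub_eq_zero_of_le h, zero_add]
      exact hba.trans hdc
    · rw [tsub_eq_zero_of_le h, add_zero]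
      exact hab.trans hcd
  calc tvDist (ν₁.bind fun x => P x) (ν₂.bind fun x => P x) ≤ η * m := hmain
    _ ≤ η * tvDist ν₁ ν₂ := mul_le_mul_right hm_le_tv η

end Aux

/-- Let `E` be a compact metric space and `P` a Markov kernel on `E` such that
`x ↦ P(x, ·)` is continuous in total variation and all the measures `P(x, ·)` are mutually
absolutely continuous. Then `P` satisfies a Doeblin-type contraction: there is `η < 1` with
`‖ν₁ P − ν₂ P‖_TV ≤ η ‖ν₁ − ν₂‖_TV` for all probability measures `ν₁, ν₂` on `E`. -/
theorem doeblin_contraction_of_tv_continuous {E : Type*} [MetricSpace E] [CompactSpace E]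
    [MeasurableSpace E] [BorelSpace E] (P : Kernel E E) [IsMarkovKernel P]
    (hcont : ∀ x₀ : E, Tendsto (fun x => tvDist (P x) (P x₀)) (𝓝 x₀) (𝓝 0))
    (hac : ∀ x y : E, P x ≪ P y) :
    ∃ η : ENNReal, η < 1 ∧ ∀ ν₁ ν₂ : Measure E, IsProbabilityMeasure ν₁ →
      IsProbabilityMeasure ν₂ →
      tvDist (ν₁.bind fun x => P x) (ν₂.bind fun x => P x) ≤ η * tvDist ν₁ ν₂ := by
  classical
  -- pointwise strict bound
  have hlt : ∀ p : E × E, tvDist (P p.1) (P p.2) < 1 := fun p =>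
    tvDist_lt_one_of_mutually_ac _ _ (hac p.1 p.2) (hac p.2 p.1)
  -- local uniform bounds
  have hloc : ∀ p : E × E, ∃ W ∈ 𝓝 p, ∃ r : ENNReal, r < 1 ∧
      ∀ q ∈ W, tvDist (P q.1) (P q.2) ≤ r := by
    intro p
    obtain ⟨r, hr1, hr2⟩ := exists_between (hlt p)
    set ε : ENNReal := (r - tvDist (P p.1) (P p.2)) / 2 with hε
    have hεpos : 0 < ε := ENNReal.div_pos (tsub_pos_of_lt hr1).ne' (by norm_num)
    have hU : {x : E | tvDist (P x) (P p.1) < ε} ∈ 𝓝 p.1 :=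
      (hcont p.1).eventually (gt_mem_nhds hεpos)
    have hV : {y : E | tvDist (P y) (P p.2) < ε} ∈ 𝓝 p.2 :=
      (hcont p.2).eventually (gt_mem_nhds hεpos)
    refine ⟨_, prod_mem_nhds hU hV, r, hr2, ?_⟩
    rintro ⟨x, y⟩ ⟨hx, hy⟩
    have tri : tvDist (P x) (P y) ≤ tvDist (P x) (P p.1) + tvDist (P p.1) (P p.2)
        + tvDist (P p.2) (P y) := by
      calc tvDist (P x) (P y) ≤ tvDist (P x) (P p.1) + tvDist (P p.1) (P y) :=
            tvDist_triangle _ _ _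
        _ ≤ tvDist (P x) (P p.1) + (tvDist (P p.1) (P p.2) + tvDist (P p.2) (P y)) := by
            gcongr; exact tvDist_triangle _ _ _
        _ = _ := by ring
    have hy' : tvDist (P p.2) (P y) < ε := by rwa [tvDist_comm]
    calc tvDist (P x) (P y)
        ≤ tvDist (P x) (P p.1) + tvDist (P p.1) (P p.2) + tvDist (P p.2) (P y) := tri
      _ ≤ ε + tvDist (P p.1) (P p.2) + ε := by
          gcongr
          exact le_of_lt hx
      _ = tvDist (P p.1) (P p.2) + (ε + ε) := by ring
      _ = tvDist (P p.1) (P p.2) + (r - tvDist (P p.1) (P p.2)) := by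
          congr 1
          rw [hε, ← two_mul, mul_comm]
          exact ENNReal.div_mul_cancel two_ne_zero (by norm_num)
      _ = r := add_tsub_cancel_of_le (le_of_lt hr1)
  choose W hW r hr1 hr2 using hloc
  obtain ⟨t, -, hcover⟩ := isCompact_univ.elim_nhds_subcover W (fun p _ => hW p)
  refine ⟨t.sup r, ?_, ?_⟩
  · exact (Finset.sup_lt_iff (show (⊥ : ENNReal) < 1 by norm_num)).mpr fun p _ => hr1 p
  · intro ν₁ ν₂ h₁ h₂
    haveI := h₁; haveI := h₂
    refine contraction_aux P (fun x y => ?_) ν₁ ν₂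
    have : (x, y) ∈ ⋃ p ∈ t, W p := hcover (Set.mem_univ _)
    simp only [Set.mem_iUnion] at this
    obtain ⟨p, hp, hmem⟩ := this
    exact (hr2 p (x, y) hmem).trans (Finset.le_sup hp)
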